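/- Let 𝓜 be a regular collection of channel sets. If some member set M of 𝓜 is self-looping (i.e., contains both ch and d ch for some channel ch), then 𝓜 is not DF-reducible. -/

import Mathlib

/-- `𝓜` DF-reduces to `𝓜'` via channel `ch`: there are two distinct member
occurrences `M₁`, `M₂` in `𝓜` with `ch ∈ M₁` and `d ch ∈ M₂`, and `𝓜'` is
obtained from `𝓜` by removing `M₁` and `M₂` and adding `(M₁ ∪ M₂) \ {ch, d ch}`. -/
def DFStepVia {α : Type*} [DecidableEq α] (d : α → α)
    (𝓜 𝓜' : Multiset (Finset α)) (ch : α) : Prop :=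
  ∃ M₁ M₂ : Finset α, M₁ ∈ 𝓜 ∧ M₂ ∈ 𝓜.erase M₁ ∧ ch ∈ M₁ ∧ d ch ∈ M₂ ∧
    𝓜' = ((M₁ ∪ M₂) \ {ch, d ch}) ::ₘ ((𝓜.erase M₁).erase M₂)

theorem DFStepVia.card_lt {α : Type*} [DecidableEq α] {d : α → α}
    {𝓜 𝓜' : Multiset (Finset α)} {ch : α}
    (h : DFStepVia d 𝓜 𝓜' ch) : Multiset.card 𝓜' < Multiset.card 𝓜 := by
  obtain ⟨M₁, M₂, h₁, h₂, -, -, rfl⟩ := h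
  have c₁ : Multiset.card (𝓜.erase M₁) < Multiset.card 𝓜 :=
    Multiset.card_erase_lt_of_mem h₁
  have c₂ : Multiset.card ((𝓜.erase M₁).erase M₂) < Multiset.card (𝓜.erase M₁) :=
    Multiset.card_erase_lt_of_mem h₂
  rw [Multiset.card_cons]
  omega

/-- A collection `𝓜` of channel sets is regular if its member sets are pairwise
disjoint and, for every channel `ch`, `ch` belongs to the union of the sets in
`𝓜` iff `d ch` does. -/
def Regular {α : Type*} [DecidableEq α] (d : α → α)
    (𝓜 : Multiset (Finset α)) : Prop :=
  Multiset.Pairwise (fun M₁ M₂ => Disjoint M₁ M₂) 𝓜 ∧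
    ∀ ch : α, ch ∈ 𝓜.sup ↔ d ch ∈ 𝓜.sup

/-- `𝓜` is DF-normal if it DF-reduces to no collection. -/
def DFNormal {α : Type*} [DecidableEq α] (d : α → α)
    (𝓜 : Multiset (Finset α)) : Prop :=
  ¬ ∃ 𝓜' ch, DFStepVia d 𝓜 𝓜' ch

/-- `𝓜` is DF-reducible if either every member set of `𝓜` is empty, or `𝓜` is
not DF-normal and every `𝓜'` to which `𝓜` DF-reduces is DF-reducible. -/
def DFReducible {α : Type*} [DecidableEq α] (d : α → α)
    (𝓜 : Multiset (Finset α)) : Prop :=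
  (∀ M ∈ 𝓜, M = ∅) ∨
    ((∃ 𝓜' ch, DFStepVia d 𝓜 𝓜' ch) ∧
      ∀ 𝓜' ch (h : DFStepVia d 𝓜 𝓜' ch), DFReducible d 𝓜')
termination_by Multiset.card 𝓜
decreasing_by exact h.card_lt

lemma list_rel_of_mem_erase {β : Type*} [DecidableEq β] {r : β → β → Prop}
    (hs : Symmetric r) {l : List β} (hp : l.Pairwise r) {a b : β}
    (ha : a ∈ l) (hb : b ∈ l.erase a) : r a b := by
  have hperm := List.perm_cons_erase ha
  have := (hperm.pairwise_iff (fun {x y} h => hs h)).mp hp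
  exact (List.pairwise_cons.mp this).1 b hb

lemma loop_ne_aux {α : Type*} [DecidableEq α] {d : α → α}
    (hinv : Function.Involutive d) {M₁ M₂ : Finset α} (hd12 : Disjoint M₁ M₂)
    {c' c : α} (hc' : c' ∈ M₁) (hdc' : d c' ∈ M₂)
    (hc : c ∈ M₁) (hdc : d c ∈ M₁) :
    c ≠ c' ∧ c ≠ d c' ∧ d c ≠ c' ∧ d c ≠ d c' := by
  have hdis := Finset.disjoint_left.mp hd12
  refine ⟨?_, ?_, ?_, ?_⟩
  · rintro rfl; exact hdis hdc hdc'
  · intro h; exact hdis hc (by rw [h]; exact hdc')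
  · intro h
    have hcd : c = d c' := by rw [← h, hinv]
    exact hdis hc (by rw [hcd]; exact hdc')
  · intro h
    have hcc : c = c' := by rw [← hinv c, h, hinv]
    exact hdis hdc (by rw [← hcc] at hdc'; exact hdc')

lemma dfstep_preserves {α : Type*} [DecidableEq α] {d : α → α}
    (hinv : Function.Involutive d) {𝓜 𝓜' : Multiset (Finset α)} {c' : α}
    (h : DFStepVia d 𝓜 𝓜' c')
    (hpd : Multiset.Pairwise (fun M₁ M₂ => Disjoint M₁ M₂) 𝓜)
    (hsl : ∃ M ∈ 𝓜, ∃ c, c ∈ M ∧ d c ∈ M) :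
    Multiset.Pairwise (fun M₁ M₂ => Disjoint M₁ M₂) 𝓜' ∧
      ∃ M ∈ 𝓜', ∃ c, c ∈ M ∧ d c ∈ M := by
  have hsym : Symmetric (fun M₁ M₂ : Finset α => Disjoint M₁ M₂) :=
    fun _ _ h => h.symm
  obtain ⟨M₁, M₂, h₁, h₂, hc₁, hc₂, rfl⟩ := h
  obtain ⟨L, hL, hLp⟩ := hpd
  subst hL
  have hmem₁ : M₁ ∈ L := h₁
  have hmem₂ : M₂ ∈ L.erase M₁ := by
    rwa [Multiset.coe_erase, Multiset.mem_coe] at h₂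
  have hd12 : Disjoint M₁ M₂ := list_rel_of_mem_erase hsym hLp hmem₁ hmem₂
  set S := (M₁ ∪ M₂) \ {c', d c'} with hS
  set L₂ := (L.erase M₁).erase M₂ with hL₂
  have hcoe : ((↑L : Multiset (Finset α)).erase M₁).erase M₂ = (↑L₂ : Multiset (Finset α)) := by
    rw [Multiset.coe_erase, Multiset.coe_erase]
  have hLe_p : (L.erase M₁).Pairwise (fun M₁ M₂ => Disjoint M₁ M₂) :=
    hLp.sublist (List.erase_sublist (a := M₁) (l := L))
  have hL₂p : L₂.Pairwise (fun M₁ M₂ => Disjoint M₁ M₂) :=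
    hLe_p.sublist (List.erase_sublist (a := M₂) (l := L.erase M₁))
  have hdisjS : ∀ N ∈ L₂, Disjoint S N := by
    intro N hN
    have hN' : N ∈ L.erase M₁ := (List.erase_sublist (a := M₂) (l := L.erase M₁)).mem hN
    have hNL : N ∈ L := (List.erase_sublist (a := M₁) (l := L)).mem hN'
    have hd1N : Disjoint M₁ N := list_rel_of_mem_erase hsym hLp hmem₁ hN'
    have hd2N : Disjoint M₂ N := list_rel_of_mem_erase hsym hLe_p hmem₂ hN
    have : Disjoint (M₁ ∪ M₂) N := Finset.disjoint_union_left.mpr ⟨hd1N, hd2N⟩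
    exact this.mono_left (Finset.sdiff_subset)
  constructor
  · rw [hcoe, Multiset.cons_coe,
      Multiset.pairwise_coe_iff_pairwise]
    exact List.pairwise_cons.mpr ⟨hdisjS, hL₂p⟩
  · obtain ⟨M, hMmem, c, hc, hdc⟩ := hsl
    by_cases hrem : M ∈ ((↑L : Multiset (Finset α)).erase M₁).erase M₂
    · exact ⟨M, Multiset.mem_cons_of_mem hrem, c, hc, hdc⟩
    · have hM12 : M = M₁ ∨ M = M₂ := by
        by_contra hcon
        push_neg at hcon
        exact hrem (((Multiset.mem_erase_of_ne hcon.2).mpr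
          ((Multiset.mem_erase_of_ne hcon.1).mpr hMmem)))
      refine ⟨S, Multiset.mem_cons_self _ _, c, ?_, ?_⟩
      · rcases hM12 with rfl | rfl
        · obtain ⟨n1, n2, -, -⟩ := loop_ne_aux hinv hd12 hc₁ hc₂ hc hdc
          simp [hS, Finset.mem_sdiff, hc, n1, n2]
        · have hdc₂' : d (d c') ∈ M₁ := by rw [hinv]; exact hc₁
          obtain ⟨n2, n1, -, -⟩ := loop_ne_aux hinv hd12.symm hc₂ hdc₂' hc hdc
          rw [hinv] at n1
          simp [hS, Finset.mem_sdiff, hc, n1, n2]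
      · rcases hM12 with rfl | rfl
        · obtain ⟨-, -, n1, n2⟩ := loop_ne_aux hinv hd12 hc₁ hc₂ hc hdc
          simp [hS, Finset.mem_sdiff, hdc, n1, n2]
        · have hdc₂' : d (d c') ∈ M₁ := by rw [hinv]; exact hc₁
          obtain ⟨-, -, n2, n1⟩ := loop_ne_aux hinv hd12.symm hc₂ hdc₂' hc hdc
          rw [hinv] at n1
          simp [hS, Finset.mem_sdiff, hdc, n1, n2]

/-- A regular collection containing a self-looping member set is not
DF-reducible. -/
theorem not_DFReducible_of_selfLooping {α : Type*} [DecidableEq α] (d : α → α)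
    (hinv : Function.Involutive d) (hfpf : ∀ ch : α, d ch ≠ ch)
    (𝓜 : Multiset (Finset α)) (hne : 𝓜 ≠ 0) (hreg : Regular d 𝓜)
    (M : Finset α) (hM : M ∈ 𝓜)
    (hself : ∃ ch : α, ch ∈ M ∧ d ch ∈ M) :
    ¬ DFReducible d 𝓜 := by
  obtain ⟨c0, hc0, hdc0⟩ := hself
  have hsl : ∃ N ∈ 𝓜, ∃ c, c ∈ N ∧ d c ∈ N := ⟨M, hM, c0, hc0, hdc0⟩
  have hpd := hreg.1
  clear hreg hM hc0 hdc0 hne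
  suffices H : ∀ n (𝓝 : Multiset (Finset α)), Multiset.card 𝓝 = n →
      Multiset.Pairwise (fun A B => Disjoint A B) 𝓝 →
      (∃ N ∈ 𝓝, ∃ c, c ∈ N ∧ d c ∈ N) → ¬ DFReducible d 𝓝 from
    H _ 𝓜 rfl hpd hsl
  intro n
  induction n using Nat.strong_induction_on with
  | _ n ih =>
    intro 𝓝 hcard hpd' hsl' hred
    rw [DFReducible] at hred
    obtain ⟨N, hN, c, hc, hdc⟩ := hsl'
    rcases hred with hall | ⟨⟨𝓝', c', hstep⟩, hnext⟩
    · rw [hall N hN] at hc; exact absurd hc (Finset.notMem_empty c)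
    · obtain ⟨hpd'', hsl''⟩ := dfstep_preserves hinv hstep hpd' ⟨N, hN, c, hc, hdc⟩
      exact ih (Multiset.card 𝓝') (hcard ▸ hstep.card_lt) 𝓝' rfl hpd'' hsl''
        (hnext 𝓝' c' hstep)
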